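/- arXiv:1801.01371 — 2 statements merged into one kernel-verified Lean document; each statement's English description precedes it below -/
import Mathlib

section
/- Let F₁ be a countable collection of dyadic cubes (in a dyadic lattice on an ADR set) with locally finite overlap in the sense that the sum ∑_{Q ∈ F₁} σ(Q) is finite, and let M ∈ ℕ. Then there exists a subcollection F₂ ⊆ F₁ such that (i) whenever Q, Q* ∈ F₂ with Q ⊊ Q*, one has ℓ(Q) ≤ 2^{-M-1} ℓ(Q*), and (ii) ∑_{Q ∈ F₁} σ(Q) ≤ C(M, n, ADR) ∑_{Q ∈ F₂} σ(Q). -/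
open MeasureTheory
open scoped ENNReal

/-- Sparsification of a family of dyadic cubes: from a countable family `F₁` of
dyadic cubes (represented as pairs (set, generation), with side length
`ℓ(Q) = 2^{-Q.2}`) with finite total mass, one can extract `F₂ ⊆ F₁` such that
nested cubes of `F₂` are separated by at least `M+1` generations, and the total
mass of `F₁` is controlled by `C(M)` times that of `F₂`. -/
theorem dyadic_sparsification {X : Type*} [MeasurableSpace X]
    (σ : Measure X) (M : ℕ) :
    ∃ C : ℝ≥0∞, C ≠ ⊤ ∧
      ∀ (F₁ : Set (Set X × ℤ)), F₁.Countable →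
        (∀ Q ∈ F₁, MeasurableSet Q.1) →
        (∀ Q ∈ F₁, ∀ Q' ∈ F₁, Q.1 ⊆ Q'.1 ∨ Q'.1 ⊆ Q.1 ∨ Disjoint Q.1 Q'.1) →
        (∀ Q ∈ F₁, ∀ Q' ∈ F₁, Q.1 ⊆ Q'.1 → Q'.2 ≤ Q.2) →
        (∀ Q ∈ F₁, ∀ Q' ∈ F₁, Q.2 = Q'.2 → Q ≠ Q' → Disjoint Q.1 Q'.1) →
        (∃ k₀ : ℤ, ∀ Q ∈ F₁, k₀ ≤ Q.2) →
        (∑' Q : F₁, σ (Q : Set X × ℤ).1) ≠ ⊤ →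
        ∃ F₂ ⊆ F₁,
          (∀ Q ∈ F₂, ∀ Q' ∈ F₂, Q.1 ⊆ Q'.1 → Q ≠ Q' →
            (2 : ℝ) ^ (-Q.2) ≤ 2 ^ (-(M : ℤ) - 1) * 2 ^ (-Q'.2)) ∧
          (∑' Q : F₁, σ (Q : Set X × ℤ).1) ≤ C * ∑' Q : F₂, σ (Q : Set X × ℤ).1 := by
  classical
  refine ⟨(M + 1 : ℕ), by simp, ?_⟩
  intro F₁ _hcnt _hmeas _hnest h4 h5 _hk0 _hfin
  set m : ℤ := (M : ℤ) + 1 with hm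
  have hmpos : (0 : ℤ) < m := by positivity
  set f : Set X × ℤ → ℝ≥0∞ := fun Q => σ Q.1 with hf
  set G : ℕ → Set (Set X × ℤ) := fun r => {Q ∈ F₁ | Q.2 % m = (r : ℤ)} with hG
  -- pointwise partition of the indicator
  have hpart : ∀ x, F₁.indicator f x
      = ∑ r ∈ Finset.range (M + 1), (G r).indicator f x := by
    intro x
    by_cases hx : x ∈ F₁
    · have h0 : 0 ≤ x.2 % m := Int.emod_nonneg _ (ne_of_gt hmpos)
      have h1 : x.2 % m < m := Int.emod_lt_of_pos _ hmpos
      set r₀ : ℕ := (x.2 % m).toNat with hr₀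
      have hr₀eq : (r₀ : ℤ) = x.2 % m := Int.toNat_of_nonneg h0
      have hr₀lt : r₀ < M + 1 := by
        have : (r₀ : ℤ) < (M : ℤ) + 1 := by rw [hr₀eq]; exact h1
        exact_mod_cast this
      rw [Set.indicator_of_mem hx,
        Finset.sum_eq_single_of_mem r₀ (Finset.mem_range.mpr hr₀lt)]
      · have hx0 : x ∈ G r₀ := ⟨hx, hr₀eq.symm⟩
        exact (Set.indicator_of_mem hx0 f).symm
      · intro r _ hr
        apply Set.indicator_of_notMem
        intro hmem
        apply hr
        have : (r : ℤ) = (r₀ : ℤ) := by rw [hr₀eq]; exact hmem.2.symm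
        exact_mod_cast this
    · rw [Set.indicator_of_notMem hx]
      refine (Finset.sum_eq_zero ?_).symm
      intro r _
      exact Set.indicator_of_notMem (fun h => hx h.1) f
  -- the total sum splits along the residue classes
  have hsum : (∑' Q : F₁, σ (Q : Set X × ℤ).1)
      = ∑ r ∈ Finset.range (M + 1), ∑' Q : G r, σ (Q : Set X × ℤ).1 := by
    rw [tsum_subtype F₁ f]
    calc ∑' x, F₁.indicator f x
        = ∑' x, ∑ r ∈ Finset.range (M + 1), (G r).indicator f x :=
          tsum_congr hpart
      _ = ∑ r ∈ Finset.range (M + 1), ∑' x, (G r).indicator f x :=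
          Summable.tsum_finsetSum (fun _ _ => ENNReal.summable)
      _ = ∑ r ∈ Finset.range (M + 1), ∑' Q : G r, σ (Q : Set X × ℤ).1 := by
          refine Finset.sum_congr rfl fun r _ => ?_
          rw [tsum_subtype (G r) f]
  -- choose the residue class with the largest mass
  obtain ⟨r₀, hr₀mem, hr₀max⟩ := Finset.exists_max_image (Finset.range (M + 1))
    (fun r => ∑' Q : G r, σ (Q : Set X × ℤ).1) ⟨0, Finset.mem_range.mpr (Nat.succ_pos M)⟩
  set F₂ : Set (Set X × ℤ) := {Q ∈ G r₀ | σ Q.1 ≠ 0} with hF₂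
  have hF₂sub : F₂ ⊆ F₁ := fun Q hQ => hQ.1.1
  refine ⟨F₂, hF₂sub, ?_, ?_⟩
  · -- separation of generations
    intro Q hQ Q' hQ' hsub hne
    have hk : Q'.2 ≤ Q.2 := h4 Q (hF₂sub hQ) Q' (hF₂sub hQ') hsub
    have hkne : Q.2 ≠ Q'.2 := by
      intro heq
      have hdisj := h5 Q (hF₂sub hQ) Q' (hF₂sub hQ') heq hne
      have : Q.1 = ∅ := hdisj.eq_bot_of_le hsub
      exact hQ.2 (by rw [this]; exact measure_empty)
    have hklt : Q'.2 < Q.2 := lt_of_le_of_ne hk (Ne.symm hkne)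
    have hmod : Q.2 % m = Q'.2 % m := by rw [hQ.1.2, hQ'.1.2]
    have hdvd : m ∣ Q.2 - Q'.2 := (Int.ModEq.symm hmod).dvd
    have hge : (M : ℤ) + 1 ≤ Q.2 - Q'.2 := Int.le_of_dvd (by omega) hdvd
    have hexp : -Q.2 ≤ -(M : ℤ) - 1 + (-Q'.2) := by omega
    calc (2 : ℝ) ^ (-Q.2) ≤ 2 ^ (-(M : ℤ) - 1 + (-Q'.2)) :=
          zpow_le_zpow_right₀ one_le_two hexp
      _ = 2 ^ (-(M : ℤ) - 1) * 2 ^ (-Q'.2) := zpow_add₀ two_ne_zero _ _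
  · -- mass estimate
    have hzero : (∑' Q : G r₀, σ (Q : Set X × ℤ).1)
        = ∑' Q : F₂, σ (Q : Set X × ℤ).1 := by
      rw [tsum_subtype (G r₀) f, tsum_subtype F₂ f]
      refine tsum_congr fun x => ?_
      by_cases hx : x ∈ F₂
      · rw [Set.indicator_of_mem hx.1, Set.indicator_of_mem hx]
      · rw [Set.indicator_of_notMem hx]
        by_cases hx' : x ∈ G r₀
        · have : σ x.1 = 0 := by
            by_contra h
            exact hx ⟨hx', h⟩
          rw [Set.indicator_of_mem hx']
          exact this
        · exact Set.indicator_of_notMem hx' f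
    rw [hsum, ← hzero]
    calc ∑ r ∈ Finset.range (M + 1), ∑' Q : G r, σ (Q : Set X × ℤ).1
        ≤ (Finset.range (M + 1)).card • (∑' Q : G r₀, σ (Q : Set X × ℤ).1) :=
          Finset.sum_le_card_nsmul _ _ _ (fun r hr => hr₀max r hr)
      _ = ((M + 1 : ℕ) : ℝ≥0∞) * ∑' Q : G r₀, σ (Q : Set X × ℤ).1 := by
          rw [Finset.card_range, nsmul_eq_mul]
end

section
/- Let Ω ⊂ ℝ^{n+1} be an open set such that σ := Hⁿ|_{∂Ω} is locally finite and σ(∂Ω \ K) = 0, where K is the cone set of Ω (the set of boundary points x admitting an open truncated cone with vertex x contained in Ω). Assume: (a) there is a countable collection {Ω_i} of bounded Lipschitz subdomains of Ω with σ(∂Ω \ ⋃_i ∂Ω_i) = 0, and (b) bounded harmonic functions on each bounded Lipschitz domain have non-tangential limits at Hⁿ-a.e. boundary point. Then every bounded harmonic function u on Ω has a weak non-tangential limit at σ-a.e. x ∈ ∂Ω. -/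
open MeasureTheory Metric Filter

/-- `u` is harmonic on the open set `Ω ⊆ ℝ^m`: it is `C²` there and the sum of
its pure second derivatives vanishes. -/
def IsHarmonicOn (m : ℕ) (u : EuclideanSpace ℝ (Fin m) → ℝ)
    (Ω : Set (EuclideanSpace ℝ (Fin m))) : Prop :=
  ContDiffOn ℝ 2 u Ω ∧ ∀ x ∈ Ω,
    ∑ i : Fin m, iteratedFDerivWithin ℝ 2 u Ω x
      ![EuclideanSpace.single i (1 : ℝ), EuclideanSpace.single i (1 : ℝ)] = 0

/-- The open truncated cone with vertex `x`, axis `v`, aperture parameter `a`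
and height `h`. -/
def TruncCone (m : ℕ) (x v : EuclideanSpace ℝ (Fin m)) (a h : ℝ) :
    Set (EuclideanSpace ℝ (Fin m)) :=
  {y | dist y x < h ∧ a * dist y x < (inner ℝ (y - x) v : ℝ)}

/-- `u` has a weak non-tangential limit at `x` relative to `Ω`: for some open
truncated cone with vertex `x` contained in `Ω`, `u` has a limit along it. -/
def HasWeakNTLimitAt (m : ℕ) (u : EuclideanSpace ℝ (Fin m) → ℝ)
    (Ω : Set (EuclideanSpace ℝ (Fin m))) (x : EuclideanSpace ℝ (Fin m)) : Prop :=
  ∃ v a h, ‖v‖ = 1 ∧ 0 < a ∧ a < 1 ∧ 0 < h ∧ TruncCone m x v a h ⊆ Ω ∧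
    ∃ L : ℝ, Tendsto u (nhdsWithin x (TruncCone m x v a h)) (nhds L)

/-- The cone set of `Ω`: boundary points admitting an open truncated cone with
vertex there contained in `Ω`. -/
def coneSet (m : ℕ) (Ω : Set (EuclideanSpace ℝ (Fin m))) :
    Set (EuclideanSpace ℝ (Fin m)) :=
  {x ∈ frontier Ω | ∃ v a h, ‖v‖ = 1 ∧ 0 < a ∧ a < 1 ∧ 0 < h ∧
    TruncCone m x v a h ⊆ Ω}

/-- Qualitative Fatou theorem on rough open sets: if `σ = Hⁿ|_{∂Ω}` is locally
finite, σ-a.e. boundary point is in the cone set, and `Ω` admits countably many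
bounded open (Lipschitz) subdomains covering σ-a.a. of `∂Ω` on each of which
bounded harmonic functions have weak non-tangential limits a.e., then every
bounded harmonic function on `Ω` has a weak non-tangential limit at σ-a.e.
boundary point. -/
theorem qualitative_fatou (n : ℕ)
    (Ω : Set (EuclideanSpace ℝ (Fin (n + 1)))) (hΩ : IsOpen Ω)
    (hlocfin : IsLocallyFiniteMeasure (μH[(n : ℝ)].restrict (frontier Ω)))
    (hcone : μH[(n : ℝ)] (frontier Ω \ coneSet (n + 1) Ω) = 0)
    (Ωi : ℕ → Set (EuclideanSpace ℝ (Fin (n + 1))))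
    (hΩiopen : ∀ i, IsOpen (Ωi i)) (hΩisub : ∀ i, Ωi i ⊆ Ω)
    (hΩibdd : ∀ i, Bornology.IsBounded (Ωi i))
    (hcover : μH[(n : ℝ)] (frontier Ω \ ⋃ i, frontier (Ωi i)) = 0)
    (hfatou : ∀ i, ∀ v : EuclideanSpace ℝ (Fin (n + 1)) → ℝ,
      IsHarmonicOn (n + 1) v (Ωi i) → (∃ Mb : ℝ, ∀ x ∈ Ωi i, |v x| ≤ Mb) →
      μH[(n : ℝ)] {x ∈ frontier (Ωi i) | ¬ HasWeakNTLimitAt (n + 1) v (Ωi i) x} = 0) :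
    ∀ u : EuclideanSpace ℝ (Fin (n + 1)) → ℝ,
      IsHarmonicOn (n + 1) u Ω → (∃ Mb : ℝ, ∀ x ∈ Ω, |u x| ≤ Mb) →
      μH[(n : ℝ)] {x ∈ frontier Ω | ¬ HasWeakNTLimitAt (n + 1) u Ω x} = 0 := by
  intro u hu hb
  have key : {x ∈ frontier Ω | ¬ HasWeakNTLimitAt (n + 1) u Ω x} ⊆
      (frontier Ω \ ⋃ i, frontier (Ωi i)) ∪
        ⋃ i, {x ∈ frontier (Ωi i) | ¬ HasWeakNTLimitAt (n + 1) u (Ωi i) x} := by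
    rintro x ⟨hxf, hxn⟩
    by_cases hx : x ∈ ⋃ i, frontier (Ωi i)
    · right
      obtain ⟨i, hi⟩ := Set.mem_iUnion.mp hx
      refine Set.mem_iUnion.mpr ⟨i, hi, fun hNT => hxn ?_⟩
      obtain ⟨v, a, h, hv, ha, ha1, hh, hsub, L, hL⟩ := hNT
      exact ⟨v, a, h, hv, ha, ha1, hh, hsub.trans (hΩisub i), L, hL⟩
    · exact Or.inl ⟨hxf, hx⟩
  refine le_antisymm ?_ zero_le
  refine le_trans (measure_mono key) ?_
  refine le_trans (measure_union_le _ _) ?_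
  rw [hcover, zero_add]
  refine le_trans (measure_iUnion_le _) ?_
  have hz : ∀ i, μH[(n : ℝ)] {x ∈ frontier (Ωi i) | ¬ HasWeakNTLimitAt (n + 1) u (Ωi i) x} = 0 := by
    intro i
    refine hfatou i u ⟨hu.1.mono (hΩisub i), fun x hx => ?_⟩ ?_
    · have e1 : ∀ j : Fin (n + 1),
          iteratedFDerivWithin ℝ 2 u (Ωi i) x
            ![EuclideanSpace.single j (1 : ℝ), EuclideanSpace.single j (1 : ℝ)] =
          iteratedFDerivWithin ℝ 2 u Ω x
            ![EuclideanSpace.single j (1 : ℝ), EuclideanSpace.single j (1 : ℝ)] := by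
        intro j
        rw [iteratedFDerivWithin_of_isOpen 2 (hΩiopen i) hx,
          iteratedFDerivWithin_of_isOpen 2 hΩ (hΩisub i hx)]
      simp only [e1]
      exact hu.2 x (hΩisub i hx)
    · obtain ⟨Mb, hMb⟩ := hb
      exact ⟨Mb, fun x hx => hMb x (hΩisub i hx)⟩
  simp [hz]
end
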